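/- Let β₁, β₂ ∈ (0,1) satisfy β₁(2−β₂) < 1 (equivalently, β₁ < 1/2, or β₁ ≥ 1/2 and β₂ > 2 − 1/β₁). Then the basin B(A₁) has positive two-dimensional Lebesgue measure, m₂(B(A₁)) > 0. -/

import Mathlib

open MeasureTheory Filter Set

noncomputable section

/-- The fiber map `g₁,β(y) = y + y(1-y)(y-β)`. -/
def g1 (β y : ℝ) : ℝ := y + y * (1 - y) * (y - β)

/-- The fiber map `g₂,β(y) = y - y(1-y)(y-β)`. -/
def g2 (β y : ℝ) : ℝ := y - y * (1 - y) * (y - β)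

/-- The doubling map on `[0,1]`. -/
def dbl (x : ℝ) : ℝ := if x ≤ 1/2 then 2*x else 2*x - 1

/-- The skew product `F(x,y) = (f(x), g₁,β₁(y))` for `x ≤ 1/2` and
`F(x,y) = (f(x), g₂,β₂(y))` for `x > 1/2`. -/
def Fsk (β1 β2 : ℝ) (p : ℝ × ℝ) : ℝ × ℝ :=
  if p.1 ≤ 1/2 then (dbl p.1, g1 β1 p.2) else (dbl p.1, g2 β2 p.2)

/-- The unit square `[0,1]²`. -/
def unitSq : Set (ℝ × ℝ) := Set.Icc (0:ℝ) 1 ×ˢ Set.Icc (0:ℝ) 1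

/-- The basin of points of `[0,1]²` whose second coordinate tends to `c` under iteration
of the skew product. -/
def basin (β1 β2 c : ℝ) : Set (ℝ × ℝ) :=
  {p | p ∈ unitSq ∧ Tendsto (fun n : ℕ => ((Fsk β1 β2)^[n] p).2) atTop (nhds c)}



lemma measurable_dbl : Measurable dbl := by
  unfold dbl
  exact Measurable.ite measurableSet_Iic (by fun_prop) (by fun_prop)

lemma dbl_map : Measure.map dbl (volume.restrict (Icc (0:ℝ) 1)) = volume.restrict (Icc (0:ℝ) 1) := by
  ext s hs
  rw [Measure.map_apply measurable_dbl hs, Measure.restrict_apply (measurable_dbl hs),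
    Measure.restrict_apply hs]
  have hsplit : dbl ⁻¹' s ∩ Icc (0:ℝ) 1
      = (dbl ⁻¹' s ∩ Icc (0:ℝ) (1/2)) ∪ (dbl ⁻¹' s ∩ Ioc (1/2 : ℝ) 1) := by
    rw [← inter_union_distrib_left]
    congr 1
    rw [← Icc_union_Ioc_eq_Icc (by norm_num : (0:ℝ) ≤ 1/2) (by norm_num : (1/2:ℝ) ≤ 1)]
  have h1 : dbl ⁻¹' s ∩ Icc (0:ℝ) (1/2) = (fun x : ℝ => 2*x) ⁻¹' (s ∩ Icc 0 1) := by
    ext x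
    simp only [mem_inter_iff, mem_preimage, mem_Icc, dbl]
    constructor
    · rintro ⟨hx, h0, h2⟩
      rw [if_pos h2] at hx
      exact ⟨hx, by linarith, by linarith⟩
    · rintro ⟨hx, h0, h2⟩
      have hb : x ≤ 1/2 := by linarith
      rw [if_pos hb]
      exact ⟨hx, by linarith, hb⟩
  have h2 : dbl ⁻¹' s ∩ Ioc (1/2 : ℝ) 1 = (fun x : ℝ => 2*x - 1) ⁻¹' (s ∩ Ioc 0 1) := by
    ext x
    simp only [mem_inter_iff, mem_preimage, mem_Ioc, dbl]
    constructor
    · rintro ⟨hx, h0, h2⟩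
      rw [if_neg (by linarith)] at hx
      exact ⟨hx, by linarith, by linarith⟩
    · rintro ⟨hx, h0, h2⟩
      have hb : ¬ (x ≤ 1/2) := by intro h; linarith
      rw [if_neg hb]
      exact ⟨hx, by linarith, by linarith⟩
  have hvol1 : volume ((fun x : ℝ => 2*x) ⁻¹' (s ∩ Icc 0 1)) = ENNReal.ofReal (1/2) * volume (s ∩ Icc 0 1) := by
    rw [show (fun x : ℝ => 2*x) = (fun x : ℝ => (2:ℝ)*x) from rfl]
    rw [Real.volume_preimage_mul_left (two_ne_zero) (s ∩ Icc 0 1)]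
    rw [abs_of_pos (by norm_num : (0:ℝ) < 2⁻¹)]
    norm_num
  have hvol2 : volume ((fun x : ℝ => 2*x - 1) ⁻¹' (s ∩ Ioc 0 1)) = ENNReal.ofReal (1/2) * volume (s ∩ Ioc 0 1) := by
    have : (fun x : ℝ => 2*x - 1) ⁻¹' (s ∩ Ioc 0 1)
        = (fun x : ℝ => (2:ℝ)*x) ⁻¹' ((fun y : ℝ => y - 1) ⁻¹' (s ∩ Ioc 0 1)) := rfl
    rw [this, Real.volume_preimage_mul_left (two_ne_zero)]
    have hmp : volume ((fun y : ℝ => y - 1) ⁻¹' (s ∩ Ioc 0 1)) = volume (s ∩ Ioc 0 1) :=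
      (measurePreserving_sub_right (volume : Measure ℝ) 1).measure_preimage
        ((hs.inter (measurableSet_Ioc : MeasurableSet (Ioc (0:ℝ) 1))).nullMeasurableSet)
    rw [hmp, abs_of_pos (by norm_num : (0:ℝ) < 2⁻¹)]
    norm_num
  have hIoc : volume (s ∩ Ioc (0:ℝ) 1) = volume (s ∩ Icc (0:ℝ) 1) := by
    apply le_antisymm
    · exact measure_mono (inter_subset_inter_right _ Ioc_subset_Icc_self)
    · calc volume (s ∩ Icc (0:ℝ) 1) ≤ volume ((s ∩ Ioc (0:ℝ) 1) ∪ {0}) := by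
            apply measure_mono
            rintro x ⟨hxs, hx0, hx1⟩
            rcases eq_or_lt_of_le hx0 with h | h
            · right; simp [← h]
            · left; exact ⟨hxs, h, hx1⟩
          _ ≤ volume (s ∩ Ioc (0:ℝ) 1) + volume ({0} : Set ℝ) := measure_union_le _ _
          _ = volume (s ∩ Ioc (0:ℝ) 1) := by simp
  rw [hsplit, measure_union _ (measurable_dbl hs |>.inter measurableSet_Ioc), h1, h2, hvol1, hvol2, hIoc,
    ← add_mul, ← ENNReal.ofReal_add (by norm_num) (by norm_num)]
  · norm_num
  · refine disjoint_left.mpr ?_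
    rintro a ⟨_, _, h⟩ ⟨_, h', _⟩
    exact absurd h (not_le.mpr h')



def mu0 : Measure ℝ := volume.restrict (Icc (0:ℝ) 1)

instance : IsFiniteMeasure mu0 := by
  constructor
  rw [mu0, Measure.restrict_apply_univ, Real.volume_Icc]
  norm_num

lemma integ_bdd {f : ℝ → ℝ} (hf : Measurable f) (C : ℝ) (hC : ∀ x, |f x| ≤ C) :
    Integrable f mu0 :=
  (integrable_const C).mono' hf.aestronglyMeasurable (Eventually.of_forall hC)

lemma dbl_map' : Measure.map dbl mu0 = mu0 := dbl_map

lemma integral_comp_dbl {f : ℝ → ℝ} (hf : Measurable f) :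
    ∫ x, f (dbl x) ∂mu0 = ∫ x, f x ∂mu0 := by
  have ham : AEStronglyMeasurable f (Measure.map dbl mu0) := by
    rw [dbl_map']; exact hf.aestronglyMeasurable
  rw [← integral_map measurable_dbl.aemeasurable ham, dbl_map']

/-- Birkhoff sums along the doubling map. -/
def birkS (g : ℝ → ℝ) (n : ℕ) (x : ℝ) : ℝ := ∑ k ∈ Finset.range n, g (dbl^[k] x)

lemma birkS_succ (g : ℝ → ℝ) (n : ℕ) (x : ℝ) :
    birkS g (n+1) x = g x + birkS g n (dbl x) := by
  unfold birkS
  rw [Finset.sum_range_succ']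
  simp [Function.iterate_succ_apply, add_comm]

lemma measurable_birkS {g : ℝ → ℝ} (hg : Measurable g) (n : ℕ) : Measurable (birkS g n) := by
  unfold birkS
  exact Finset.measurable_sum _ (fun k _ => hg.comp (measurable_dbl.iterate k))

lemma abs_birkS_le {g : ℝ → ℝ} (C : ℝ) (hC : ∀ x, |g x| ≤ C) (n : ℕ) (x : ℝ) :
    |birkS g n x| ≤ n * C := by
  calc |birkS g n x| ≤ ∑ k ∈ Finset.range n, |g (dbl^[k] x)| := Finset.abs_sum_le_sum_abs _ _
    _ ≤ ∑ _k ∈ Finset.range n, C := Finset.sum_le_sum (fun k _ => hC _)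
    _ = n * C := by simp [mul_comm]

/-- Running maximum of Birkhoff sums. -/
def Phi (g : ℝ → ℝ) : ℕ → ℝ → ℝ
  | 0 => fun _ => 0
  | (N+1) => fun x => max (Phi g N x) (birkS g (N+1) x)

lemma Phi_nonneg (g : ℝ → ℝ) (N : ℕ) (x : ℝ) : 0 ≤ Phi g N x := by
  induction N with
  | zero => simp [Phi]
  | succ N ih => exact le_trans ih (le_max_left _ _)

lemma Phi_mono (g : ℝ → ℝ) (x : ℝ) : Monotone (fun N => Phi g N x) :=
  monotone_nat_of_le_succ (fun N => le_max_left _ _)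

lemma measurable_Phi {g : ℝ → ℝ} (hg : Measurable g) (N : ℕ) : Measurable (Phi g N) := by
  induction N with
  | zero => simpa [Phi] using measurable_const
  | succ N ih => exact ih.max (measurable_birkS hg (N+1))

lemma abs_Phi_le {g : ℝ → ℝ} (C : ℝ) (hC : ∀ x, |g x| ≤ C) (N : ℕ) (x : ℝ) :
    |Phi g N x| ≤ N * (|C| + 1) := by
  induction N with
  | zero => simp [Phi]
  | succ N ih =>
    have h1 : |birkS g (N+1) x| ≤ (N+1) * (|C|+1) := by
      have h0 := abs_birkS_le C hC (N+1) x
      have hCa : C ≤ |C| + 1 := le_trans (le_abs_self C) (by linarith)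
      have hn : (0:ℝ) ≤ ((N:ℝ)+1) := by positivity
      push_cast at h0 ⊢
      nlinarith [abs_nonneg (birkS g (N+1) x)]
    have h2 : |Phi g N x| ≤ ((N:ℝ)+1) * (|C|+1) := by
      refine le_trans ih ?_
      nlinarith [abs_nonneg C]
    push_cast
    simp only [Phi]
    rcases max_cases (Phi g N x) (birkS g (N+1) x) with ⟨h, _⟩ | ⟨h, _⟩ <;> rw [h]
    · exact h2
    · push_cast at h1; exact h1

lemma Phi_rec (g : ℝ → ℝ) (N : ℕ) (x : ℝ) :
    Phi g (N+1) x = max 0 (g x + Phi g N (dbl x)) := by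
  induction N with
  | zero =>
    simp [Phi, birkS_succ, birkS]
  | succ N ih =>
    show max (Phi g (N+1) x) (birkS g (N+2) x) = _
    rw [ih, birkS_succ g (N+1) x, max_assoc, max_add_add_left]
    rfl

lemma birkS_le_Phi (g : ℝ → ℝ) (n : ℕ) (x : ℝ) : birkS g n x ≤ Phi g n x := by
  cases n with
  | zero => simp [Phi, birkS]
  | succ n => exact le_max_right _ _

lemma Phi_pos_exists {g : ℝ → ℝ} {N : ℕ} {x : ℝ} (h : 0 < Phi g N x) :
    ∃ n, 0 < birkS g n x := by
  induction N with
  | zero => simp [Phi] at h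
  | succ N ih =>
    rcases lt_max_iff.mp h with h' | h'
    · exact ih h'
    · exact ⟨N+1, h'⟩

theorem met (g : ℝ → ℝ) (hg : Measurable g) (C : ℝ) (hC : ∀ x, |g x| ≤ C)
    (hneg : ∫ x, g x ∂mu0 < 0) : 0 < mu0 {x | ∀ n, birkS g n x ≤ 0} := by
  rw [pos_iff_ne_zero]
  intro h0
  set P : Set ℝ := {x | ∀ n, birkS g n x ≤ 0} with hP
  set A : ℕ → Set ℝ := fun N => {x | 0 < Phi g (N+1) x} with hA
  have hginteg : Integrable g mu0 := integ_bdd hg C hC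
  have hPhiInteg : ∀ N, Integrable (Phi g N) mu0 :=
    fun N => integ_bdd (measurable_Phi hg N) _ (abs_Phi_le C hC N)
  have hPhiTInteg : ∀ N, Integrable (fun x => Phi g N (dbl x)) mu0 :=
    fun N => integ_bdd ((measurable_Phi hg N).comp measurable_dbl) _
      (fun x => abs_Phi_le C hC N (dbl x))
  have hAm : ∀ N, MeasurableSet (A N) := fun N =>
    measurableSet_lt measurable_const (measurable_Phi hg (N+1))
  have hAmono : Monotone A := by
    intro N M hNM x hx
    exact lt_of_lt_of_le hx (Phi_mono g x (Nat.succ_le_succ hNM))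
  have hkey : ∀ N, 0 ≤ ∫ x in A N, g x ∂mu0 := by
    intro N
    have hpt : ∀ x, Phi g (N+1) x - Phi g (N+1) (dbl x) ≤ (A N).indicator g x := by
      intro x
      by_cases hx : x ∈ A N
      · rw [indicator_of_mem hx]
        have hxpos : 0 < Phi g (N+1) x := hx
        have ha : 0 < g x + Phi g N (dbl x) := by
          by_contra hle
          push_neg at hle
          rw [Phi_rec, max_eq_left hle] at hxpos
          exact lt_irrefl 0 hxpos
        have h1 : Phi g (N+1) x = g x + Phi g N (dbl x) := by
          rw [Phi_rec, max_eq_right ha.le]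
        have h2 : Phi g N (dbl x) ≤ Phi g (N+1) (dbl x) :=
          Phi_mono g (dbl x) (Nat.le_succ N)
        linarith
      · rw [indicator_of_notMem hx]
        have h1 : Phi g (N+1) x = 0 :=
          le_antisymm (not_lt.mp hx) (Phi_nonneg _ _ _)
        have h2 : 0 ≤ Phi g (N+1) (dbl x) := Phi_nonneg _ _ _
        linarith
    have hint := integral_mono ((hPhiInteg (N+1)).sub (hPhiTInteg (N+1)))
      (hginteg.indicator (hAm N)) hpt
    simp only [Pi.sub_apply] at hint
    rw [integral_sub (hPhiInteg (N+1)) (hPhiTInteg (N+1)),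
      integral_comp_dbl (measurable_Phi hg (N+1)), sub_self,
      integral_indicator (hAm N)] at hint
    exact hint
  have hU : ⋃ N, A N = Pᶜ := by
    ext x
    simp only [mem_iUnion, mem_compl_iff, hA, hP, mem_setOf_eq, not_forall, not_le]
    constructor
    · rintro ⟨N, hN⟩
      exact Phi_pos_exists hN
    · rintro ⟨n, hn⟩
      refine ⟨n, lt_of_lt_of_le hn ?_⟩
      exact le_trans (birkS_le_Phi g n x) (Phi_mono g x (Nat.le_succ n))
  have hiU : ∫ x in ⋃ N, A N, g x ∂mu0 = ∫ x, g x ∂mu0 := by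
    rw [hU]
    refine setIntegral_eq_integral_of_ae_compl_eq_zero ?_
    have hae : ∀ᵐ x ∂mu0, x ∉ P := measure_eq_zero_iff_ae_notMem.mp h0
    filter_upwards [hae] with x hx
    intro hxc
    exact absurd (not_not.mp hxc) hx
  have hlim := tendsto_setIntegral_of_monotone hAm hAmono hginteg.integrableOn
  have hge : 0 ≤ ∫ x in ⋃ N, A N, g x ∂mu0 := ge_of_tendsto' hlim hkey
  rw [hiU] at hge
  linarith



lemma g1_mem {β y : ℝ} (hβ : β ∈ Ioo (0:ℝ) 1) (hy : y ∈ Icc (0:ℝ) 1) : g1 β y ∈ Icc (0:ℝ) 1 := by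
  obtain ⟨h0, h1⟩ := hy
  obtain ⟨hb0, hb1⟩ := hβ
  constructor
  · unfold g1; nlinarith [mul_nonneg h0 (sub_nonneg.mpr h1), mul_nonneg (mul_nonneg h0 (sub_nonneg.mpr h1)) h0]
  · unfold g1; nlinarith [mul_nonneg h0 (sub_nonneg.mpr h1), mul_nonneg (sub_nonneg.mpr h1) (sub_nonneg.mpr h1)]

lemma g2_mem {β y : ℝ} (hβ : β ∈ Ioo (0:ℝ) 1) (hy : y ∈ Icc (0:ℝ) 1) : g2 β y ∈ Icc (0:ℝ) 1 := by
  obtain ⟨h0, h1⟩ := hy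
  obtain ⟨hb0, hb1⟩ := hβ
  constructor
  · unfold g2; nlinarith [mul_nonneg h0 (sub_nonneg.mpr h1), sq_nonneg (y - β), sq_nonneg y]
  · unfold g2; nlinarith [mul_nonneg h0 (sub_nonneg.mpr h1), mul_nonneg (mul_nonneg h0 (sub_nonneg.mpr h1)) h0]

lemma g1_contr {β y : ℝ} (hβ : β ∈ Ioo (0:ℝ) 1) (hy : y ∈ Icc (0:ℝ) 1) :
    1 - g1 β y ≤ (1 - y) * (β + 2*(1-y)) := by
  obtain ⟨h0, h1⟩ := hy
  obtain ⟨hb0, hb1⟩ := hβ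
  unfold g1
  nlinarith [mul_nonneg (sub_nonneg.mpr h1) (sub_nonneg.mpr h1), sq_nonneg (1-y),
    mul_nonneg (mul_nonneg (sub_nonneg.mpr h1) (sub_nonneg.mpr h1)) hb0.le]

lemma g2_contr {β y : ℝ} (hβ : β ∈ Ioo (0:ℝ) 1) (hy : y ∈ Icc (0:ℝ) 1) :
    1 - g2 β y ≤ (1 - y) * (2 - β) := by
  obtain ⟨h0, h1⟩ := hy
  obtain ⟨hb0, hb1⟩ := hβ
  unfold g2
  nlinarith [mul_nonneg (sub_nonneg.mpr h1) h0, sq_nonneg (1-y),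
    mul_nonneg (mul_nonneg (sub_nonneg.mpr h1) (sub_nonneg.mpr h1)) h0]

lemma iter_fst (β1 β2 : ℝ) (p : ℝ × ℝ) (n : ℕ) : ((Fsk β1 β2)^[n] p).1 = dbl^[n] p.1 := by
  induction n with
  | zero => rfl
  | succ n ih =>
    rw [Function.iterate_succ_apply', Function.iterate_succ_apply', ← ih]
    unfold Fsk
    split <;> rfl

lemma iter_snd (β1 β2 : ℝ) (p : ℝ × ℝ) (n : ℕ) :
    ((Fsk β1 β2)^[n+1] p).2 =
      if dbl^[n] p.1 ≤ 1/2 then g1 β1 (((Fsk β1 β2)^[n] p).2)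
      else g2 β2 (((Fsk β1 β2)^[n] p).2) := by
  rw [Function.iterate_succ_apply']
  have h := iter_fst β1 β2 p n
  rcases le_or_gt (dbl^[n] p.1) (1/2) with hd | hd
  · rw [if_pos hd]
    have h2 : ((Fsk β1 β2)^[n] p).1 ≤ 1/2 := by rw [h]; exact hd
    simp only [Fsk]
    rw [if_pos h2]
  · rw [if_neg (not_le.mpr hd)]
    have h2 : ¬ ((Fsk β1 β2)^[n] p).1 ≤ 1/2 := by rw [h]; exact not_le.mpr hd
    simp only [Fsk]
    rw [if_neg h2]

lemma fiber_tendsto (β1 β2 : ℝ) (hβ1 : β1 ∈ Ioo (0:ℝ) 1) (hβ2 : β2 ∈ Ioo (0:ℝ) 1)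
    (ε c' : ℝ) (hεpos : 0 < ε) (hε1 : ε ≤ 1) (hc' : c' < 0)
    (x y : ℝ) (hy : y ∈ Icc (1-ε) 1)
    (hsum : ∀ n : ℕ, (∑ k ∈ Finset.range n,
        (if dbl^[k] x ≤ 1/2 then Real.log (β1+2*ε) else Real.log (2-β2))) ≤ c' * n) :
    Tendsto (fun n : ℕ => ((Fsk β1 β2)^[n] (x,y)).2) atTop (nhds 1) := by
  set W : ℕ → ℝ := fun k => if dbl^[k] x ≤ 1/2 then β1+2*ε else 2-β2 with hW
  set Pd : ℕ → ℝ := fun n => ∏ k ∈ Finset.range n, W k with hPdDef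
  have hWpos : ∀ k, 0 < W k := by
    intro k
    rw [hW]
    dsimp only
    split
    · nlinarith [hβ1.1]
    · nlinarith [hβ2.2]
  have hPdpos : ∀ n, 0 < Pd n := fun n => Finset.prod_pos (fun k _ => hWpos k)
  have hPd : ∀ n, Pd n ≤ Real.exp (c' * n) := by
    intro n
    have hlogprod : Pd n = Real.exp (∑ k ∈ Finset.range n, Real.log (W k)) := by
      rw [Real.exp_sum]
      exact (Finset.prod_congr rfl (fun k _ => (Real.exp_log (hWpos k)).symm))
    have heq : ∀ k, Real.log (W k)
        = (if dbl^[k] x ≤ 1/2 then Real.log (β1+2*ε) else Real.log (2-β2)) := by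
      intro k
      rw [hW]
      dsimp only
      exact apply_ite Real.log _ _ _
    rw [hlogprod]
    apply Real.exp_le_exp.mpr
    calc (∑ k ∈ Finset.range n, Real.log (W k))
        = ∑ k ∈ Finset.range n, (if dbl^[k] x ≤ 1/2 then Real.log (β1+2*ε) else Real.log (2-β2)) :=
          Finset.sum_congr rfl (fun k _ => heq k)
      _ ≤ c' * n := hsum n
  have hPd1 : ∀ n, Pd n ≤ 1 := by
    intro n
    refine le_trans (hPd n) (Real.exp_le_one_iff.mpr ?_)
    have : (0:ℝ) ≤ n := Nat.cast_nonneg n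
    nlinarith
  -- main induction
  have hmain : ∀ n, ((Fsk β1 β2)^[n] (x,y)).2 ∈ Icc (0:ℝ) 1 ∧
      1 - ((Fsk β1 β2)^[n] (x,y)).2 ≤ ε * Pd n := by
    intro n
    induction n with
    | zero =>
      simp only [Function.iterate_zero_apply]
      constructor
      · exact ⟨by linarith [hy.1], hy.2⟩
      · have hp0 : Pd 0 = 1 := Finset.prod_range_zero W
        rw [hp0]
        linarith [hy.1]
    | succ n ih =>
      obtain ⟨hyn, hzn⟩ := ih
      set yn := ((Fsk β1 β2)^[n] (x,y)).2 with hyndef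
      have hzε : 1 - yn ≤ ε := le_trans hzn (by nlinarith [hPd1 n, hPdpos n])
      have hz0 : 0 ≤ 1 - yn := by linarith [hyn.2]
      have hPsucc : Pd (n+1) = Pd n * W n := Finset.prod_range_succ W n
      rw [iter_snd β1 β2 (x,y) n]
      rcases le_or_gt (dbl^[n] x) (1/2) with hd | hd
      · rw [if_pos hd]
        have hWn : W n = β1 + 2*ε := by rw [hW]; dsimp only; exact if_pos hd
        refine ⟨g1_mem hβ1 hyn, ?_⟩
        have h1 := g1_contr hβ1 hyn
        have h2 : (1 - yn) * (β1 + 2*(1-yn)) ≤ (1 - yn) * (β1 + 2*ε) := by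
          apply mul_le_mul_of_nonneg_left _ hz0
          linarith
        have h3 : (1 - yn) * (β1 + 2*ε) ≤ (ε * Pd n) * (β1 + 2*ε) := by
          apply mul_le_mul_of_nonneg_right hzn
          nlinarith [hβ1.1]
        rw [hPsucc, hWn]
        calc 1 - g1 β1 yn ≤ (1 - yn) * (β1 + 2*(1-yn)) := h1
          _ ≤ (1 - yn) * (β1 + 2*ε) := h2
          _ ≤ (ε * Pd n) * (β1 + 2*ε) := h3
          _ = ε * (Pd n * (β1 + 2*ε)) := by ring
      · rw [if_neg (not_le.mpr hd)]
        have hWn : W n = 2 - β2 := by rw [hW]; dsimp only; exact if_neg (not_le.mpr hd)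
        refine ⟨g2_mem hβ2 hyn, ?_⟩
        have h1 := g2_contr hβ2 hyn
        have h3 : (1 - yn) * (2 - β2) ≤ (ε * Pd n) * (2 - β2) := by
          apply mul_le_mul_of_nonneg_right hzn
          nlinarith [hβ2.2]
        rw [hPsucc, hWn]
        calc 1 - g2 β2 yn ≤ (1 - yn) * (2 - β2) := h1
          _ ≤ (ε * Pd n) * (2 - β2) := h3
          _ = ε * (Pd n * (2 - β2)) := by ring
  -- squeeze
  have hzero : Tendsto (fun n : ℕ => 1 - ((Fsk β1 β2)^[n] (x,y)).2) atTop (nhds 0) := by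
    apply squeeze_zero (fun n => by linarith [(hmain n).1.2]) 
      (fun n => le_trans (hmain n).2 (mul_le_mul_of_nonneg_left (hPd n) hεpos.le))
    have hexp : Tendsto (fun n : ℕ => Real.exp c' ^ n) atTop (nhds 0) :=
      tendsto_pow_atTop_nhds_zero_of_lt_one (Real.exp_nonneg c') (Real.exp_lt_one_iff.mpr hc')
    have : (fun n : ℕ => ε * Real.exp (c' * n)) = fun n : ℕ => ε * Real.exp c' ^ n := by
      funext n
      rw [mul_comm c' (n:ℝ), Real.exp_nat_mul]
    rw [this]
    simpa using hexp.const_mul ε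
  have := hzero.const_sub 1
  simp only [sub_sub_cancel, sub_zero] at this
  exact this

theorem stmt7 (β1 β2 : ℝ) (hβ1 : β1 ∈ Set.Ioo (0:ℝ) 1) (hβ2 : β2 ∈ Set.Ioo (0:ℝ) 1)
    (hcond : β1 * (2 - β2) < 1) :
    0 < volume (basin β1 β2 1) := by
  obtain ⟨hβ1p, hβ1l⟩ := hβ1
  obtain ⟨hβ2p, hβ2l⟩ := hβ2
  have hb2 : (1:ℝ) < 2 - β2 := by linarith
  have hb2pos : (0:ℝ) < 2 - β2 := by linarith
  have hβlt : β1 < 1/(2-β2) := by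
    rw [lt_div_iff₀ hb2pos]
    linarith
  set ε := (1/(2-β2) - β1)/4 with hεdef
  have hεpos : 0 < ε := by rw [hεdef]; linarith
  have hε1 : ε ≤ 1 := by
    have h1 : 1/(2-β2) < 1 := by rw [div_lt_one hb2pos]; linarith
    rw [hεdef]; linarith
  set b1 := β1 + 2*ε with hb1def
  have hb1pos : 0 < b1 := by rw [hb1def]; linarith
  have hb1lt : b1 < 1/(2-β2) := by rw [hb1def, hεdef]; linarith
  have hprod : b1 * (2-β2) < 1 := by
    have h := mul_lt_mul_of_pos_right hb1lt hb2pos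
    rwa [one_div, inv_mul_cancel₀ (ne_of_gt hb2pos)] at h
  set L := Real.log b1 + Real.log (2-β2) with hLdef
  have hLneg : L < 0 := by
    rw [hLdef, ← Real.log_mul (ne_of_gt hb1pos) (ne_of_gt hb2pos)]
    exact Real.log_neg (mul_pos hb1pos hb2pos) hprod
  set c' := L/4 with hc'def
  have hc'neg : c' < 0 := by rw [hc'def]; linarith
  set φ : ℝ → ℝ := fun x => if x ≤ 1/2 then Real.log b1 else Real.log (2-β2) with hφdef
  have hφm : Measurable φ := Measurable.ite measurableSet_Iic measurable_const measurable_const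
  have hφbd : ∀ x, |φ x| ≤ |Real.log b1| + |Real.log (2-β2)| := by
    intro x
    rw [hφdef]
    dsimp only
    split
    · linarith [abs_nonneg (Real.log (2-β2))]
    · linarith [abs_nonneg (Real.log b1)]
  set g : ℝ → ℝ := fun x => φ x - c' with hgdef
  have hgm : Measurable g := hφm.sub measurable_const
  have hgbd : ∀ x, |g x| ≤ |Real.log b1| + |Real.log (2-β2)| + |c'| := by
    intro x
    rw [hgdef]
    dsimp only
    calc |φ x - c'| ≤ |φ x| + |c'| := abs_sub _ _
      _ ≤ |Real.log b1| + |Real.log (2-β2)| + |c'| := by linarith [hφbd x]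
  -- measure of the unit interval
  have hμuniv : mu0 univ = 1 := by
    rw [mu0, Measure.restrict_apply_univ, Real.volume_Icc]
    norm_num
  haveI : IsFiniteMeasure mu0 := ⟨by rw [hμuniv]; exact ENNReal.one_lt_top⟩
  -- integral of φ
  have hIφ : ∫ x, φ x ∂mu0 = L/2 := by
    have hsplitset : Icc (0:ℝ) 1 = Icc (0:ℝ) (1/2) ∪ Ioc (1/2:ℝ) 1 :=
      (Icc_union_Ioc_eq_Icc (by norm_num) (by norm_num)).symm
    have hdisj : Disjoint (Icc (0:ℝ) (1/2)) (Ioc (1/2:ℝ) 1) := by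
      rw [disjoint_left]
      rintro a ⟨_, h1⟩ ⟨h2, _⟩
      linarith
    have hint1 : IntegrableOn φ (Icc (0:ℝ) (1/2)) volume := by
      apply Measure.integrableOn_of_bounded (M := |Real.log b1| + |Real.log (2-β2)|)
      · rw [Real.volume_Icc]; exact ENNReal.ofReal_ne_top
      · exact hφm.aestronglyMeasurable
      · exact Eventually.of_forall (fun x => by rw [Real.norm_eq_abs]; exact hφbd x)
    have hint2 : IntegrableOn φ (Ioc (1/2:ℝ) 1) volume := by
      apply Measure.integrableOn_of_bounded (M := |Real.log b1| + |Real.log (2-β2)|)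
      · rw [Real.volume_Ioc]; exact ENNReal.ofReal_ne_top
      · exact hφm.aestronglyMeasurable
      · exact Eventually.of_forall (fun x => by rw [Real.norm_eq_abs]; exact hφbd x)
    have e1 : ∫ x in Icc (0:ℝ) (1/2), φ x = Real.log b1 * (1/2) := by
      have hcg : ∫ x in Icc (0:ℝ) (1/2), φ x = ∫ _x in Icc (0:ℝ) (1/2), Real.log b1 :=
        setIntegral_congr_fun measurableSet_Icc
          (fun x hx => by rw [hφdef]; exact if_pos (hx.2 : x ≤ 1/2))
      rw [hcg, setIntegral_const, measureReal_def, Real.volume_Icc, smul_eq_mul,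
        ENNReal.toReal_ofReal (by norm_num)]
      ring
    have e2 : ∫ x in Ioc (1/2:ℝ) 1, φ x = Real.log (2-β2) * (1/2) := by
      have hcg : ∫ x in Ioc (1/2:ℝ) 1, φ x = ∫ _x in Ioc (1/2:ℝ) 1, Real.log (2-β2) :=
        setIntegral_congr_fun measurableSet_Ioc
          (fun x hx => by rw [hφdef]; exact if_neg (not_le.mpr (hx.1 : 1/2 < x)))
      rw [hcg, setIntegral_const, measureReal_def, Real.volume_Ioc, smul_eq_mul,
        ENNReal.toReal_ofReal (by norm_num)]
      ring
    show ∫ x in Icc (0:ℝ) 1, φ x = L/2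
    rw [hsplitset, setIntegral_union hdisj measurableSet_Ioc hint1 hint2, e1, e2, hLdef]
    ring
  have hneg : ∫ x, g x ∂mu0 < 0 := by
    rw [hgdef]
    rw [integral_sub (integ_bdd hφm _ hφbd) (integrable_const c'), integral_const, measureReal_def, hμuniv, hIφ]
    simp only [ENNReal.toReal_one, one_smul]
    rw [hc'def]
    linarith
  have hmet := met g hgm _ hgbd hneg
  set P := {x : ℝ | ∀ n, birkS g n x ≤ 0} with hPdef
  have hPm : MeasurableSet P := by
    have hPeq : P = ⋂ n, {x | birkS g n x ≤ 0} := by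
      ext x; simp [hPdef]
    rw [hPeq]
    exact MeasurableSet.iInter
      (fun n => measurableSet_le (measurable_birkS hgm n) measurable_const)
  -- basin inclusion
  have hsub : (P ∩ Icc (0:ℝ) 1) ×ˢ Icc (1-ε) 1 ⊆ basin β1 β2 1 := by
    rintro ⟨x, y⟩ ⟨⟨hxP, hxI⟩, hyI⟩
    constructor
    · exact ⟨hxI, ⟨by linarith [hyI.1], hyI.2⟩⟩
    · apply fiber_tendsto β1 β2 ⟨hβ1p, hβ1l⟩ ⟨hβ2p, hβ2l⟩ ε c' hεpos hε1 hc'neg x y hyI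
      intro n
      have h := hxP n
      have h2 : ∑ k ∈ Finset.range n, (φ (dbl^[k] x) - c') ≤ 0 := h
      rw [Finset.sum_sub_distrib, Finset.sum_const, Finset.card_range, nsmul_eq_mul,
        sub_nonpos] at h2
      calc (∑ k ∈ Finset.range n,
            (if dbl^[k] x ≤ 1/2 then Real.log (β1+2*ε) else Real.log (2-β2)))
          = ∑ k ∈ Finset.range n, φ (dbl^[k] x) := by
            refine Finset.sum_congr rfl (fun k _ => ?_)
            rw [hφdef, hb1def]
        _ ≤ (n:ℝ) * c' := h2
        _ = c' * n := mul_comm _ _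
  -- measure computation
  have hvol : volume ((P ∩ Icc (0:ℝ) 1) ×ˢ Icc (1-ε) 1) = mu0 P * ENNReal.ofReal ε := by
    rw [Measure.volume_eq_prod, Measure.prod_prod]
    congr 1
    · rw [mu0, Measure.restrict_apply hPm]
    · rw [Real.volume_Icc]
      congr 1
      ring
  calc (0:ENNReal) < mu0 P * ENNReal.ofReal ε :=
        ENNReal.mul_pos (ne_of_gt hmet) (ne_of_gt (ENNReal.ofReal_pos.mpr hεpos))
    _ = volume ((P ∩ Icc (0:ℝ) 1) ×ˢ Icc (1-ε) 1) := hvol.symm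
    _ ≤ volume (basin β1 β2 1) := measure_mono hsub
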